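/- Let p be prime and n ≥ 1. The double coset K_0(p) w(p^n) K_0(p), where w(t) = [[0,-1],[t,0]], decomposes as the disjoint union over s ∈ Z_p/p^{n-1} Z_p of the left cosets y(ps) w(p^n) K_0(p), where y(t) = [[1,0],[t,1]]. -/

import Mathlib

open Matrix

/-- The Iwahori subgroup `K₀(p)` of `GL₂(ℚ_p)`. -/
def IwahoriQ (p : ℕ) [Fact p.Prime] : Set (Matrix (Fin 2) (Fin 2) ℚ_[p]) :=
  {g | (∀ i j, ‖g i j‖ ≤ 1) ∧ ‖g.det‖ = 1 ∧ ‖g 1 0‖ ≤ (p : ℝ)⁻¹}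

/-- w(t) = [[0,-1],[t,0]] -/
noncomputable def wMatQ (p : ℕ) [Fact p.Prime] (t : ℚ_[p]) :
    Matrix (Fin 2) (Fin 2) ℚ_[p] := !![0, -1; t, 0]

/-- y(t) = [[1,0],[t,1]] -/
noncomputable def yMatQ (p : ℕ) [Fact p.Prime] (t : ℚ_[p]) :
    Matrix (Fin 2) (Fin 2) ℚ_[p] := !![1, 0; t, 1]

/-- The double coset `K g K`. -/
def dCosetQ (p : ℕ) [Fact p.Prime] (K : Set (Matrix (Fin 2) (Fin 2) ℚ_[p]))
    (g : Matrix (Fin 2) (Fin 2) ℚ_[p]) : Set (Matrix (Fin 2) (Fin 2) ℚ_[p]) :=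
  {m | ∃ k1 ∈ K, ∃ k2 ∈ K, m = k1 * g * k2}

/-- The left coset `g K`. -/
def lCosetQ (p : ℕ) [Fact p.Prime] (K : Set (Matrix (Fin 2) (Fin 2) ℚ_[p]))
    (g : Matrix (Fin 2) (Fin 2) ℚ_[p]) : Set (Matrix (Fin 2) (Fin 2) ℚ_[p]) :=
  {m | ∃ k ∈ K, m = g * k}

namespace Stmt2Aux

lemma norm_nat_le_one (p : ℕ) [Fact p.Prime] (s : ℕ) : ‖((s : ℕ) : ℚ_[p])‖ ≤ 1 := by
  have := Padic.norm_int_le_one (p := p) (s : ℤ)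
  push_cast at this
  exact this

/-- Generic membership criterion for the Iwahori. -/
lemma mem_iwahori_of (p : ℕ) [Fact p.Prime] (x y z w : ℚ_[p])
    (hx : ‖x‖ ≤ 1) (hy : ‖y‖ ≤ 1) (hz : ‖z‖ ≤ (p:ℝ)⁻¹) (hw : ‖w‖ ≤ 1)
    (hdet : ‖x * w - y * z‖ = 1) : !![x, y; z, w] ∈ IwahoriQ p := by
  have hp1 : (1:ℝ) < p := by exact_mod_cast (Fact.out : p.Prime).one_lt
  refine ⟨?_, ?_, ?_⟩
  · intro i j
    fin_cases i <;> fin_cases j <;> simp only [Matrix.cons_val', Matrix.cons_val_zero,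
      Matrix.cons_val_one, Matrix.head_cons, Matrix.empty_val', Matrix.cons_val_fin_one,
      Matrix.of_apply]
    · exact hx
    · exact hy
    · exact hz.trans (by rw [inv_le_one_iff₀]; right; exact hp1.le)
    · exact hw
  · rw [Matrix.det_fin_two_of]; exact hdet
  · show ‖z‖ ≤ _; exact hz

lemma mat_eq_iff (p : ℕ) [Fact p.Prime] (A B C D A' B' C' D' : ℚ_[p]) :
    (!![A, B; C, D] : Matrix (Fin 2) (Fin 2) ℚ_[p]) = !![A', B'; C', D'] ↔
      A = A' ∧ B = B' ∧ C = C' ∧ D = D' := by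
  constructor
  · intro h
    rw [← Matrix.ext_iff] at h
    exact ⟨by simpa using h 0 0, by simpa using h 0 1, by simpa using h 1 0, by simpa using h 1 1⟩
  · rintro ⟨rfl, rfl, rfl, rfl⟩; rfl

lemma ywk (p : ℕ) [Fact p.Prime] (u t A B C D : ℚ_[p]) :
    yMatQ p u * wMatQ p t * !![A, B; C, D] = !![-C, -D; t*A - u*C, t*B - u*D] := by
  rw [yMatQ, wMatQ, Matrix.mul_fin_two, Matrix.mul_fin_two, mat_eq_iff]
  refine ⟨by ring, by ring, by ring, by ring⟩

lemma kw (p : ℕ) [Fact p.Prime] (t A B C D : ℚ_[p]) :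
    !![A, B; C, D] * wMatQ p t = !![t*B, -A; t*D, -C] := by
  rw [wMatQ, Matrix.mul_fin_two, mat_eq_iff]
  refine ⟨by ring, by ring, by ring, by ring⟩

lemma iwahori_mul (p : ℕ) [Fact p.Prime] {g h : Matrix (Fin 2) (Fin 2) ℚ_[p]}
    (hg : g ∈ IwahoriQ p) (hh : h ∈ IwahoriQ p) : g * h ∈ IwahoriQ p := by
  obtain ⟨hg1, hg2, hg3⟩ := hg
  obtain ⟨hh1, hh2, hh3⟩ := hh
  have hmul : ∀ i j, (g*h) i j = g i 0 * h 0 j + g i 1 * h 1 j := by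
    intro i j; rw [Matrix.mul_apply, Fin.sum_univ_two]
  refine ⟨?_, ?_, ?_⟩
  · intro i j
    rw [hmul]
    refine le_trans (Padic.nonarchimedean _ _) (max_le ?_ ?_) <;>
      rw [norm_mul] <;> exact mul_le_one₀ (hg1 _ _) (norm_nonneg _) (hh1 _ _)
  · rw [Matrix.det_mul, norm_mul, hg2, hh2, one_mul]
  · rw [hmul]
    refine le_trans (Padic.nonarchimedean _ _) (max_le ?_ ?_) <;> rw [norm_mul]
    · calc ‖g 1 0‖ * ‖h 0 0‖ ≤ (p:ℝ)⁻¹ * 1 :=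
        mul_le_mul hg3 (hh1 0 0) (norm_nonneg _) (by positivity)
      _ = (p:ℝ)⁻¹ := mul_one _
    · calc ‖g 1 1‖ * ‖h 1 0‖ ≤ 1 * (p:ℝ)⁻¹ :=
        mul_le_mul (hg1 1 1) hh3 (norm_nonneg _) zero_le_one
      _ = (p:ℝ)⁻¹ := one_mul _

lemma approx (p : ℕ) [Fact p.Prime] (m : ℕ) (a c : ℚ_[p])
    (ha : ‖a‖ = 1) (hc : ‖c‖ ≤ (p:ℝ)⁻¹) :
    ∃ s : ℕ, s < p ^ m ∧ ‖c - (p:ℚ_[p]) * (s:ℚ_[p]) * a‖ ≤ ((p:ℝ) ^ (m+1))⁻¹ := by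
  have hp0 : (0:ℝ) < p := by exact_mod_cast (Fact.out : p.Prime).pos
  have hpne : (p:ℚ_[p]) ≠ 0 := Nat.cast_ne_zero.mpr (Fact.out : p.Prime).ne_zero
  have hane : a ≠ 0 := by intro h; rw [h, norm_zero] at ha; simp at ha
  have hx : ‖c / ((p:ℚ_[p]) * a)‖ ≤ 1 := by
    rw [norm_div, norm_mul, Padic.norm_p, ha, mul_one, div_le_one (by positivity)]
    exact hc
  set x : ℤ_[p] := ⟨_, hx⟩ with hxdef
  refine ⟨x.appr m, x.appr_lt m, ?_⟩
  have hspec := x.appr_spec m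
  rw [Ideal.mem_span_singleton] at hspec
  obtain ⟨u, hu⟩ := hspec
  have hq : (x : ℚ_[p]) - (x.appr m : ℚ_[p]) = (p:ℚ_[p])^m * (u : ℚ_[p]) := by
    exact_mod_cast congrArg (PadicInt.Coe.ringHom (p := p)) hu
  have hxq : (x : ℚ_[p]) = c / ((p:ℚ_[p]) * a) := rfl
  have key : c - (p:ℚ_[p]) * (x.appr m : ℚ_[p]) * a
      = (p:ℚ_[p]) * a * ((p:ℚ_[p])^m * (u : ℚ_[p])) := by
    rw [← hq, hxq]; field_simp
  rw [key, norm_mul, norm_mul, norm_mul, Padic.norm_p, ha, norm_pow, Padic.norm_p]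
  calc (p:ℝ)⁻¹ * 1 * ((p:ℝ)⁻¹^m * ‖(u:ℚ_[p])‖) ≤ (p:ℝ)⁻¹ * 1 * ((p:ℝ)⁻¹^m * 1) := by
        gcongr; exact u.norm_le_one
    _ = ((p:ℝ) ^ (m+1))⁻¹ := by rw [mul_one, mul_one, pow_succ, mul_inv, ← inv_pow]; ring

/-- Forward direction core: factor `k * w` as `y(ps) * w * M` with `M` in the Iwahori. -/
lemma forward_core (p : ℕ) [Fact p.Prime] (m : ℕ) (k : Matrix (Fin 2) (Fin 2) ℚ_[p])
    (hk : k ∈ IwahoriQ p) :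
    ∃ s : ℕ, s < p ^ m ∧ ∃ M ∈ IwahoriQ p,
      k * wMatQ p ((p:ℚ_[p])^(m+1))
        = yMatQ p ((p:ℚ_[p]) * (s:ℚ_[p])) * wMatQ p ((p:ℚ_[p])^(m+1)) * M := by
  have hp1 : (1:ℝ) < p := by exact_mod_cast (Fact.out : p.Prime).one_lt
  have hp0 : (0:ℝ) < p := by linarith
  have hpne : (p:ℚ_[p]) ≠ 0 := Nat.cast_ne_zero.mpr (Fact.out : p.Prime).ne_zero
  have hpwne : ((p:ℚ_[p]))^(m+1) ≠ 0 := pow_ne_zero _ hpne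
  have hnormpw : ‖((p:ℚ_[p]))^(m+1)‖ = ((p:ℝ)^(m+1))⁻¹ := by
    rw [norm_pow, Padic.norm_p, inv_pow]
  obtain ⟨a, b, c, d, rfl⟩ : ∃ a b c d, k = !![a, b; c, d] :=
    ⟨_, _, _, _, Matrix.eta_fin_two k⟩
  obtain ⟨h1, h2, h3⟩ := hk
  have ha1 : ‖a‖ ≤ 1 := by simpa using h1 0 0
  have hb1 : ‖b‖ ≤ 1 := by simpa using h1 0 1
  have hd1 : ‖d‖ ≤ 1 := by simpa using h1 1 1
  have hc1 : ‖c‖ ≤ (p:ℝ)⁻¹ := by simpa using h3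
  have hdet : ‖a * d - b * c‖ = 1 := by
    rw [Matrix.det_fin_two_of] at h2; exact h2
  have hbc : ‖b * c‖ < 1 := by
    rw [norm_mul]
    calc ‖b‖ * ‖c‖ ≤ 1 * (p:ℝ)⁻¹ := mul_le_mul hb1 hc1 (norm_nonneg _) zero_le_one
    _ < 1 := by rw [one_mul, inv_lt_one_iff₀]; right; exact hp1
  have had : ‖a * d‖ = 1 := by
    have hrw : a * d = (a * d - b * c) + b * c := by ring
    have hne : ‖a * d - b * c‖ ≠ ‖b * c‖ := by rw [hdet]; exact (ne_of_lt hbc).symm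
    rw [hrw, Padic.add_eq_max_of_ne hne, hdet, max_eq_left hbc.le]
  have ha : ‖a‖ = 1 := by
    rw [norm_mul] at had
    nlinarith [norm_nonneg a, norm_nonneg d]
  obtain ⟨s, hs, hkey⟩ := approx p m a c ha hc1
  refine ⟨s, hs,
    !![d - (p:ℚ_[p]) * (s:ℚ_[p]) * b, -((c - (p:ℚ_[p]) * (s:ℚ_[p]) * a) / (p:ℚ_[p])^(m+1));
       -((p:ℚ_[p])^(m+1) * b), a], ?_, ?_⟩
  · refine mem_iwahori_of p _ _ _ _ ?_ ?_ ?_ ha.le ?_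
    · rw [sub_eq_add_neg]
      refine le_trans (Padic.nonarchimedean _ _) (max_le hd1 ?_)
      rw [norm_neg, norm_mul, norm_mul, Padic.norm_p]
      calc (p:ℝ)⁻¹ * ‖(s:ℚ_[p])‖ * ‖b‖ ≤ 1 * 1 * 1 := by
            refine mul_le_mul (mul_le_mul ?_ (norm_nat_le_one p s) (norm_nonneg _)
              zero_le_one) hb1 (norm_nonneg _) (by norm_num)
            rw [inv_le_one_iff₀]; right; exact hp1.le
        _ = 1 := by ring
    · rw [norm_neg, norm_div, hnormpw, div_le_one (by positivity)]
      exact hkey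
    · rw [norm_neg, norm_mul, hnormpw]
      calc ((p:ℝ)^(m+1))⁻¹ * ‖b‖ ≤ ((p:ℝ)^(m+1))⁻¹ * 1 :=
            mul_le_mul le_rfl hb1 (norm_nonneg _) (by positivity)
        _ = ((p:ℝ)^(m+1))⁻¹ := mul_one _
        _ ≤ (p:ℝ)⁻¹ := by
            rw [inv_le_inv₀ (by positivity) hp0]
            calc (p:ℝ) = (p:ℝ)^1 := (pow_one _).symm
              _ ≤ (p:ℝ)^(m+1) := pow_le_pow_right₀ hp1.le (by omega)
    · have : (d - (p:ℚ_[p]) * (s:ℚ_[p]) * b) * a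
          - (-((c - (p:ℚ_[p]) * (s:ℚ_[p]) * a) / (p:ℚ_[p])^(m+1))) * (-((p:ℚ_[p])^(m+1) * b))
          = a * d - b * c := by
        field_simp
        ring
      rw [this]
      exact hdet
  · rw [kw, ywk, mat_eq_iff]
    refine ⟨by ring, by ring, by ring, ?_⟩
    field_simp
    ring

/-- `y(ps)` is in the Iwahori. -/
lemma yMem (p : ℕ) [Fact p.Prime] (s : ℕ) :
    yMatQ p ((p:ℚ_[p]) * (s:ℚ_[p])) ∈ IwahoriQ p := by
  have hps : ‖(p:ℚ_[p]) * (s:ℚ_[p])‖ ≤ (p:ℝ)⁻¹ := by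
    rw [norm_mul, Padic.norm_p]
    calc (p:ℝ)⁻¹ * ‖(s:ℚ_[p])‖ ≤ (p:ℝ)⁻¹ * 1 :=
        mul_le_mul le_rfl (norm_nat_le_one p s) (norm_nonneg _) (by positivity)
      _ = (p:ℝ)⁻¹ := mul_one _
  rw [yMatQ]
  refine mem_iwahori_of p _ _ _ _ (by simp) (by simp) hps (by simp) (by simp)

/-- Disjointness core. -/
lemma disjoint_core (p : ℕ) [Fact p.Prime] (m : ℕ) (s t : ℕ)
    (hs : s < p ^ m) (ht : t < p ^ m)
    {k k' : Matrix (Fin 2) (Fin 2) ℚ_[p]} (hk : k ∈ IwahoriQ p) (hk' : k' ∈ IwahoriQ p)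
    (heq : yMatQ p ((p:ℚ_[p]) * (s:ℚ_[p])) * wMatQ p ((p:ℚ_[p])^(m+1)) * k
        = yMatQ p ((p:ℚ_[p]) * (t:ℚ_[p])) * wMatQ p ((p:ℚ_[p])^(m+1)) * k') : s = t := by
  have hp1 : (1:ℝ) < p := by exact_mod_cast (Fact.out : p.Prime).one_lt
  have hp0 : (0:ℝ) < p := by linarith
  obtain ⟨a, b, c, d, rfl⟩ : ∃ a b c d, k = !![a, b; c, d] :=
    ⟨_, _, _, _, Matrix.eta_fin_two k⟩
  obtain ⟨a', b', c', d', rfl⟩ : ∃ a b c d, k' = !![a, b; c, d] :=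
    ⟨_, _, _, _, Matrix.eta_fin_two k'⟩
  obtain ⟨h1, h2, h3⟩ := hk
  obtain ⟨h1', h2', h3'⟩ := hk'
  have ha1' : ‖a'‖ ≤ 1 := by simpa using h1' 0 0
  have hb1' : ‖b'‖ ≤ 1 := by simpa using h1' 0 1
  have ha1 : ‖a‖ ≤ 1 := by simpa using h1 0 0
  have hb1 : ‖b‖ ≤ 1 := by simpa using h1 0 1
  have hdet' : ‖a' * d' - b' * c'‖ = 1 := by
    rw [Matrix.det_fin_two_of] at h2'; exact h2'
  rw [ywk, ywk, mat_eq_iff] at heq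
  obtain ⟨ec, ed, e1, e2⟩ := heq
  rw [neg_inj] at ec ed
  subst ec; subst ed
  -- key algebraic identity
  have key : (p:ℚ_[p]) * ((s:ℚ_[p]) - (t:ℚ_[p])) * (a' * d - b' * c)
      = (p:ℚ_[p])^(m+1) * (a' * b - b' * a) := by
    linear_combination b' * e1 - a' * e2
  have hnorm : (p:ℝ)⁻¹ * ‖(s:ℚ_[p]) - (t:ℚ_[p])‖ ≤ ((p:ℝ)⁻¹)^(m+1) := by
    have hL : ‖(p:ℚ_[p]) * ((s:ℚ_[p]) - (t:ℚ_[p])) * (a' * d - b' * c)‖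
        = (p:ℝ)⁻¹ * ‖(s:ℚ_[p]) - (t:ℚ_[p])‖ := by
      rw [norm_mul, norm_mul, Padic.norm_p, hdet', mul_one]
    have hR : ‖(p:ℚ_[p])^(m+1) * (a' * b - b' * a)‖ ≤ ((p:ℝ)⁻¹)^(m+1) := by
      rw [norm_mul, norm_pow, Padic.norm_p]
      have h4 : ‖a' * b - b' * a‖ ≤ 1 := by
        have hna := Padic.nonarchimedean (a' * b) (-(b' * a))
        rw [← sub_eq_add_neg] at hna
        refine hna.trans (max_le ?_ ?_)
        · rw [norm_mul]; exact mul_le_one₀ ha1' (norm_nonneg _) hb1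
        · rw [norm_neg, norm_mul]; exact mul_le_one₀ hb1' (norm_nonneg _) ha1
      calc ((p:ℝ)⁻¹)^(m+1) * ‖a' * b - b' * a‖ ≤ ((p:ℝ)⁻¹)^(m+1) * 1 :=
            mul_le_mul le_rfl h4 (norm_nonneg _) (by positivity)
        _ = ((p:ℝ)⁻¹)^(m+1) := mul_one _
    rw [← hL, key]
    exact hR
  have hdvd : ((p:ℤ)^m) ∣ ((s:ℤ) - (t:ℤ)) := by
    rw [← Padic.norm_int_le_pow_iff_dvd]
    have hle : ‖(s:ℚ_[p]) - (t:ℚ_[p])‖ ≤ ((p:ℝ)⁻¹)^m := by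
      have hmul := mul_le_mul_of_nonneg_left hnorm hp0.le
      rw [← mul_assoc, mul_inv_cancel₀ hp0.ne', one_mul] at hmul
      calc ‖(s:ℚ_[p]) - (t:ℚ_[p])‖ ≤ (p:ℝ) * ((p:ℝ)⁻¹)^(m+1) := hmul
        _ = ((p:ℝ)⁻¹)^m := by
            rw [pow_succ]
            field_simp
    rw [_root_.zpow_neg, zpow_natCast, ← inv_pow]
    push_cast
    exact hle
  have habs : (s:ℤ) - (t:ℤ) = 0 := by
    refine Int.eq_zero_of_abs_lt_dvd hdvd ?_
    have hcast : ((p:ℤ)^m) = ((p^m : ℕ) : ℤ) := by push_cast; ring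
    rw [hcast, abs_lt]
    omega
  omega

end Stmt2Aux

open Stmt2Aux in
/-- `K₀(p) w(pⁿ) K₀(p)` (n ≥ 1) is the disjoint union over `s ∈ ℤ_p/p^{n-1}ℤ_p`
of the left cosets `y(ps) w(pⁿ) K₀(p)`. -/
theorem stmt2 (p : ℕ) [Fact p.Prime] (n : ℕ) (hn : 1 ≤ n) :
    (dCosetQ p (IwahoriQ p) (wMatQ p ((p : ℚ_[p]) ^ n)) =
      ⋃ s ∈ Finset.range (p ^ (n - 1)),
        lCosetQ p (IwahoriQ p) (yMatQ p ((p : ℚ_[p]) * (s : ℚ_[p])) * wMatQ p ((p : ℚ_[p]) ^ n))) ∧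
    (∀ s ∈ Finset.range (p ^ (n - 1)), ∀ t ∈ Finset.range (p ^ (n - 1)), s ≠ t →
      Disjoint
        (lCosetQ p (IwahoriQ p) (yMatQ p ((p : ℚ_[p]) * (s : ℚ_[p])) * wMatQ p ((p : ℚ_[p]) ^ n)))
        (lCosetQ p (IwahoriQ p) (yMatQ p ((p : ℚ_[p]) * (t : ℚ_[p])) * wMatQ p ((p : ℚ_[p]) ^ n)))) := by
  obtain ⟨m, rfl⟩ : ∃ m, n = m + 1 := ⟨n - 1, (Nat.succ_pred_eq_of_pos hn).symm⟩
  simp only [Nat.add_sub_cancel]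
  constructor
  · ext x
    simp only [dCosetQ, lCosetQ, Set.mem_setOf_eq, Set.mem_iUnion, Finset.mem_range]
    constructor
    · rintro ⟨k1, hk1, k2, hk2, rfl⟩
      obtain ⟨s, hs, M, hM, hfact⟩ := forward_core p m k1 hk1
      exact ⟨s, hs, M * k2, iwahori_mul p hM hk2, by rw [hfact, mul_assoc]⟩
    · rintro ⟨s, hs, k, hk, rfl⟩
      exact ⟨yMatQ p ((p:ℚ_[p]) * (s:ℚ_[p])), yMem p s, k, hk, rfl⟩
  · intro s hs t ht hst
    rw [Finset.mem_range] at hs ht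
    rw [Set.disjoint_left]
    rintro x ⟨k, hk, rfl⟩ ⟨k', hk', hx2⟩
    exact hst (disjoint_core p m s t hs ht hk hk' hx2)
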